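/- Let R = F_2[x_1, ..., x_k] and for each i ≥ 0 let Q_i : R → R be the F_2-linear derivation determined by Q_i(x_j) = x_j^{2^{i+1}}. Then for m ≤ n, the composite Q_n Q_{n-1} ⋯ Q_1 Q_0 applied to the product x_1 x_2 ⋯ x_m is zero. -/

import Mathlib

open MvPolynomial

/-- The composite `Q n ∘ Q (n-1) ∘ ⋯ ∘ Q 0`. -/
def compQ {A : Type*} (Q : ℕ → A → A) : ℕ → A → A
  | 0 => Q 0
  | n + 1 => Q (n + 1) ∘ compQ Q n

section Aux

variable {k : ℕ}

local notation "R" => MvPolynomial (Fin k) (ZMod 2)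

lemma deriv_sq_zero (D : Derivation (ZMod 2) R R) (g : R) : D (g ^ 2) = 0 := by
  rw [Derivation.leibniz_pow]
  have : (2 : ℕ) • (g ^ (2 - 1) • D g) = (g ^ (2 - 1) • D g) + (g ^ (2 - 1) • D g) :=
    two_smul ℕ _
  rw [this, CharTwo.add_self_eq_zero]

lemma deriv_prod (D : Derivation (ZMod 2) R R) (T : Finset (Fin k)) :
    D (∏ i ∈ T, X i) = ∑ j ∈ T, (∏ i ∈ T.erase j, X i) * D (X j) := by
  classical
  induction T using Finset.induction_on with
  | empty => simp
  | @insert a s ha ih =>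
    rw [Finset.prod_insert ha, Derivation.leibniz, Finset.sum_insert ha, ih,
      Finset.smul_sum]
    rw [Finset.erase_insert ha]
    have : ∀ j ∈ s, (X a : R) • ((∏ i ∈ s.erase j, X i) * D (X j)) =
        (∏ i ∈ (insert a s).erase j, X i) * D (X j) := by
      intro j hj
      have haj : a ≠ j := by rintro rfl; exact ha hj
      rw [Finset.erase_insert_of_ne haj, Finset.prod_insert
        (by simp [Finset.mem_erase]; exact fun _ => ha)]
      rw [smul_eq_mul]; ring
    rw [Finset.sum_congr rfl this]
    rw [add_comm]
    congr 1

/-- The filtration: span of (square) * (product of at most `s` distinct variables). -/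
noncomputable def Sspan (s : ℕ) : Submodule (ZMod 2) R :=
  Submodule.span (ZMod 2)
    {f | ∃ g : R, ∃ T : Finset (Fin k), T.card ≤ s ∧ f = g ^ 2 * ∏ i ∈ T, X i}

lemma key0 (D : Derivation (ZMod 2) R R) {f : R} (hf : f ∈ Sspan (k := k) 0) :
    D f = 0 := by
  induction hf using Submodule.span_induction with
  | mem x hx =>
    obtain ⟨g, T, hT, rfl⟩ := hx
    have : T = ∅ := Finset.card_eq_zero.mp (Nat.le_zero.mp hT)
    subst this
    rw [Finset.prod_empty, mul_one]
    exact deriv_sq_zero D g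
  | zero => simp
  | add x y hx hy ihx ihy => rw [map_add, ihx, ihy, add_zero]
  | smul a x hx ih => rw [D.map_smul, ih, smul_zero]

lemma keyS (D : Derivation (ZMod 2) R R)
    (hD : ∀ j : Fin k, ∃ h : R, D (X j) = h ^ 2) {s : ℕ} {f : R}
    (hf : f ∈ Sspan (k := k) (s + 1)) : D f ∈ Sspan (k := k) s := by
  induction hf using Submodule.span_induction with
  | mem x hx =>
    obtain ⟨g, T, hT, rfl⟩ := hx
    rw [Derivation.leibniz, deriv_sq_zero, smul_zero, add_zero, deriv_prod,
      Finset.smul_sum]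
    apply Submodule.sum_mem
    intro j hj
    obtain ⟨h, hh⟩ := hD j
    apply Submodule.subset_span
    refine ⟨g * h, T.erase j, ?_, ?_⟩
    · calc (T.erase j).card ≤ T.card - 1 := by
            rw [Finset.card_erase_of_mem hj]
      _ ≤ s := by omega
    · rw [hh, smul_eq_mul]; ring
  | zero => simp [Sspan]
  | add x y hx hy ihx ihy => rw [map_add]; exact Submodule.add_mem _ ihx ihy
  | smul a x hx ih => rw [D.map_smul]; exact Submodule.smul_mem _ _ ih

lemma comp_lemma (Q : ℕ → Derivation (ZMod 2) R R)
    (hQ : ∀ (i : ℕ) (j : Fin k), ∃ h : R, Q i (X j) = h ^ 2) :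
    ∀ (n s : ℕ) (f : R), f ∈ Sspan (k := k) s →
      (s ≤ n → compQ (fun i f => Q i f) n f = 0) ∧
      compQ (fun i f => Q i f) n f ∈ Sspan (k := k) (s - (n + 1)) := by
  intro n
  induction n with
  | zero =>
    intro s f hf
    match s with
    | 0 =>
      refine ⟨fun _ => key0 (Q 0) hf, ?_⟩
      show Q 0 f ∈ _
      rw [key0 (Q 0) hf]; exact Submodule.zero_mem _
    | t + 1 =>
      refine ⟨fun h => by omega, ?_⟩
      show Q 0 f ∈ _
      simpa using keyS (Q 0) (hQ 0) hf
  | succ n IH =>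
    intro s f hf
    obtain ⟨ih0, ihmem⟩ := IH s f hf
    have hz : s ≤ n + 1 → compQ (fun i f => Q i f) (n + 1) f = 0 := by
      intro hs
      show Q (n + 1) (compQ (fun i f => Q i f) n f) = 0
      rcases Nat.lt_or_ge s (n + 1) with h | h
      · rw [ih0 (by omega)]; simp
      · have : s = n + 1 := le_antisymm hs h
        subst this
        have : compQ (fun i f => Q i f) n f ∈ Sspan (k := k) 0 := by
          simpa using ihmem
        exact key0 (Q (n + 1)) this
    refine ⟨hz, ?_⟩
    rcases Nat.lt_or_ge s (n + 2) with h | h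
    · rw [hz (by omega)]; exact Submodule.zero_mem _
    · have h1 : s - (n + 1) = (s - (n + 2)) + 1 := by omega
      rw [h1] at ihmem
      exact keyS (Q (n + 1)) (hQ (n + 1)) ihmem

end Aux

theorem stmt_5 (k n m : ℕ) (hmn : m ≤ n) (hmk : m ≤ k)
    (Q : ℕ → Derivation (ZMod 2) (MvPolynomial (Fin k) (ZMod 2))
      (MvPolynomial (Fin k) (ZMod 2)))
    (hQ : ∀ (i : ℕ) (j : Fin k), Q i (X j) = X j ^ 2 ^ (i + 1)) :
    compQ (fun i f => Q i f) n (∏ i : Fin m, X (Fin.castLE hmk i)) = 0 := by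
  classical
  have hQ' : ∀ (i : ℕ) (j : Fin k), ∃ h, Q i (X j) = h ^ 2 := by
    intro i j
    exact ⟨X j ^ 2 ^ i, by rw [hQ, ← pow_mul, pow_succ]⟩
  have hmem : (∏ i : Fin m, X (Fin.castLE hmk i)) ∈ Sspan (k := k) m := by
    apply Submodule.subset_span
    refine ⟨1, Finset.image (Fin.castLE hmk) Finset.univ, ?_, ?_⟩
    · calc (Finset.image (Fin.castLE hmk) Finset.univ).card
          ≤ (Finset.univ : Finset (Fin m)).card := Finset.card_image_le
      _ = m := by simp
    · rw [one_pow, one_mul, Finset.prod_image (fun a _ b _ h => Fin.castLE_injective hmk h)]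
  exact (comp_lemma Q hQ' n m _ hmem).1 hmn
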